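/- Let a, b, c, a', b', c' ∈ ℝ² be six pairwise distinct points such that a, b, c are affinely independent, a', b', c' are affinely independent, and the three lines through a and a', through b and b', and through c and c' pass through a common point o distinct from all six points, with no two of the nine points {a,b,c,a',b',c',o} creating degenerate incidences (i.e. a' ∉ line(b,c) etc. and the configuration is otherwise generic). Then the graph with vertex set {a, b, c, a', b', c'} and the nine edges ab, bc, ca, a'b', b'c', c'a', aa', bb', cc', realized by these points, admits a nonzero equilibrium stress. -/

import Mathlib

lemma aux_pair {V : Type*} [NormedAddCommGroup V] [NormedSpace ℝ V]
    (p q r : V) (h : AffineIndependent ℝ ![p, q, r]) :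
    ∀ x y : ℝ, x • (q - p) + y • (r - p) = 0 → x = 0 ∧ y = 0 := by
  rw [affineIndependent_iff_not_collinear_set] at h
  intro x y hxy
  by_cases hy : y = 0
  · subst hy
    rw [zero_smul, add_zero, smul_eq_zero] at hxy
    rcases hxy with hx | hqp
    · exact ⟨hx, rfl⟩
    · have hq : q = p := sub_eq_zero.mp hqp
      refine absurd ?_ h
      rw [hq]
      simpa using collinear_pair ℝ p r
  · exfalso
    apply h
    rw [collinear_iff_of_mem (Set.mem_insert p _)]
    refine ⟨q - p, ?_⟩
    intro z hz
    have h2 : r - p = (y⁻¹ * (-x)) • (q - p) := by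
      rw [mul_smul, eq_inv_smul_iff₀ hy]
      linear_combination (norm := module) hxy
    rcases hz with rfl | rfl | rfl
    · exact ⟨0, by simp⟩
    · exact ⟨1, by simp⟩
    · exact ⟨y⁻¹ * (-x), by rw [← h2]; simp⟩

lemma aux_line {V : Type*} [NormedAddCommGroup V] [NormedSpace ℝ V]
    (o u u₁ : V) (hcol : Collinear ℝ {o, u, u₁})
    (hu : u ≠ o) (hu₁ : u₁ ≠ o) (hne : u₁ ≠ u) :
    ∃ t : ℝ, t ≠ 0 ∧ t ≠ 1 ∧ u₁ - o = t • (u - o) := by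
  rw [collinear_iff_of_mem (Set.mem_insert o _)] at hcol
  obtain ⟨v, hv⟩ := hcol
  obtain ⟨r₁, hr₁⟩ := hv u (by simp)
  obtain ⟨r₂, hr₂⟩ := hv u₁ (by simp)
  have h1 : u - o = r₁ • v := by rw [hr₁]; simp
  have h2 : u₁ - o = r₂ • v := by rw [hr₂]; simp
  have hr₁0 : r₁ ≠ 0 := by
    rintro rfl
    exact hu (by rw [hr₁]; simp)
  refine ⟨r₂ / r₁, ?_, ?_, ?_⟩
  · intro h
    have : r₂ = 0 := by field_simp at h; simpa using h
    exact hu₁ (by rw [hr₂, this]; simp)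
  · intro h
    have : r₂ = r₁ := by field_simp at h; exact h
    exact hne (by rw [hr₂, hr₁, this])
  · rw [h1, h2, smul_smul, div_mul_cancel₀ _ hr₁0]


/-- Lemma 2(1), Desargues configurations: two triangles `a b c` and `a₁ b₁ c₁` in
perspective from a point `o` (distinct from the six vertices, with the configuration
otherwise generic) form a stressable framework: the graph with the nine edges
`ab, bc, ca, a₁b₁, b₁c₁, c₁a₁, aa₁, bb₁, cc₁` admits a nonzero equilibrium stress. -/
theorem desargues_configuration_stressable
    (a b c a₁ b₁ c₁ o : EuclideanSpace ℝ (Fin 2))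
    (hpd : List.Pairwise (· ≠ ·) [a, b, c, a₁, b₁, c₁])
    (ho : o ∉ ([a, b, c, a₁, b₁, c₁] : List (EuclideanSpace ℝ (Fin 2))))
    (habc : AffineIndependent ℝ ![a, b, c])
    (habc₁ : AffineIndependent ℝ ![a₁, b₁, c₁])
    (hoa : Collinear ℝ {o, a, a₁}) (hob : Collinear ℝ {o, b, b₁})
    (hoc : Collinear ℝ {o, c, c₁})
    (ha₁ : a₁ ∉ affineSpan ℝ ({b, c} : Set (EuclideanSpace ℝ (Fin 2))))
    (hb₁ : b₁ ∉ affineSpan ℝ ({a, c} : Set (EuclideanSpace ℝ (Fin 2))))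
    (hc₁ : c₁ ∉ affineSpan ℝ ({a, b} : Set (EuclideanSpace ℝ (Fin 2))))
    (ha : a ∉ affineSpan ℝ ({b₁, c₁} : Set (EuclideanSpace ℝ (Fin 2))))
    (hb : b ∉ affineSpan ℝ ({a₁, c₁} : Set (EuclideanSpace ℝ (Fin 2))))
    (hc : c ∉ affineSpan ℝ ({a₁, b₁} : Set (EuclideanSpace ℝ (Fin 2)))) :
    ∃ sab sbc sca sa₁b₁ sb₁c₁ sc₁a₁ saa₁ sbb₁ scc₁ : ℝ,
      (sab • (a - b) + sca • (a - c) + saa₁ • (a - a₁) = 0) ∧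
      (sab • (b - a) + sbc • (b - c) + sbb₁ • (b - b₁) = 0) ∧
      (sbc • (c - b) + sca • (c - a) + scc₁ • (c - c₁) = 0) ∧
      (sa₁b₁ • (a₁ - b₁) + sc₁a₁ • (a₁ - c₁) + saa₁ • (a₁ - a) = 0) ∧
      (sa₁b₁ • (b₁ - a₁) + sb₁c₁ • (b₁ - c₁) + sbb₁ • (b₁ - b) = 0) ∧
      (sb₁c₁ • (c₁ - b₁) + sc₁a₁ • (c₁ - a₁) + scc₁ • (c₁ - c) = 0) ∧
      ¬(sab = 0 ∧ sbc = 0 ∧ sca = 0 ∧ sa₁b₁ = 0 ∧ sb₁c₁ = 0 ∧ sc₁a₁ = 0 ∧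
        saa₁ = 0 ∧ sbb₁ = 0 ∧ scc₁ = 0) := by
  simp only [List.pairwise_cons, List.mem_cons, List.not_mem_nil, List.mem_singleton,
    not_or, List.Pairwise.nil] at hpd ho
  obtain ⟨hoa', hob', hoc', hoa₁', hob₁', hoc₁', -⟩ := ho
  obtain ⟨h1, h2, h3, -⟩ := hpd
  -- coordinates of o w.r.t. triangle a b c
  have li : LinearIndependent ℝ ![b - a, c - a] :=
    LinearIndependent.pair_iff.mpr (aux_pair a b c habc)
  have hsp : Submodule.span ℝ (Set.range ![b - a, c - a]) = ⊤ := by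
    apply Submodule.eq_top_of_finrank_eq
    rw [finrank_span_eq_card li]
    simp
  have hmem : o - a ∈ Submodule.span ℝ ({b - a, c - a} : Set (EuclideanSpace ℝ (Fin 2))) := by
    have hr : Set.range ![b - a, c - a] = {b - a, c - a} := by
      ext z; constructor <;> · intro h; simp [Fin.exists_fin_two] at h ⊢; tauto
    rw [← hr, hsp]; trivial
  obtain ⟨x, y, hxy⟩ := Submodule.mem_span_pair.mp hmem
  have h0 : (1 - x - y) • (a - o) + x • (b - o) + y • (c - o) = 0 := by
    linear_combination (norm := module) hxy
  -- perspectivity ratios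
  obtain ⟨ta, hta0, hta1, ea⟩ := aux_line o a a₁ hoa (Ne.symm hoa') (Ne.symm hoa₁')
    (Ne.symm (h1 a₁ (by simp)))
  obtain ⟨tb, htb0, htb1, eb⟩ := aux_line o b b₁ hob (Ne.symm hob') (Ne.symm hob₁')
    (Ne.symm (h2 b₁ (by simp)))
  obtain ⟨tc, htc0, htc1, ec⟩ := aux_line o c c₁ hoc (Ne.symm hoc') (Ne.symm hoc₁')
    (Ne.symm (h3 c₁ (by simp)))
  have ea' : a₁ = ta • (a - o) + o := by rw [← ea]; abel
  have eb' : b₁ = tb • (b - o) + o := by rw [← eb]; abel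
  have ec' : c₁ = tc • (c - o) + o := by rw [← ec]; abel
  subst ea' eb' ec'
  -- S' ≠ 0 from affine independence of the second triangle
  have hS : (1 - x - y) * tb * tc + x * ta * tc + y * ta * tb ≠ 0 := by
    intro hS0
    have hS0v : ((1 - x - y) * tb * tc + x * ta * tc + y * ta * tb) • (a - o)
        = (0 : ℝ) • (a - o) := by rw [hS0]
    have key := aux_pair _ _ _ habc₁ (x * ta * tc) (y * ta * tb)
      (by linear_combination (norm := module) (ta * tb * tc) • h0 + (-ta) • hS0v)
    have hx0 : x = 0 := by
      rcases mul_eq_zero.mp key.1 with h' | h'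
      · rcases mul_eq_zero.mp h' with h'' | h''
        · exact h''
        · exact absurd h'' hta0
      · exact absurd h' htc0
    have hy0 : y = 0 := by
      rcases mul_eq_zero.mp key.2 with h' | h'
      · rcases mul_eq_zero.mp h' with h'' | h''
        · exact h''
        · exact absurd h'' hta0
      · exact absurd h' htb0
    rw [hx0, hy0] at hS0
    norm_num at hS0
    rcases hS0 with h' | h'
    · exact htb0 h'
    · exact htc0 h'
  have htb1' : (1 : ℝ) - tb ≠ 0 := sub_ne_zero_of_ne (Ne.symm htb1)
  have htc1' : (1 : ℝ) - tc ≠ 0 := sub_ne_zero_of_ne (Ne.symm htc1)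
  have hta1' : (1 : ℝ) - ta ≠ 0 := sub_ne_zero_of_ne (Ne.symm hta1)
  refine ⟨-((1-x-y)*x*((1-ta)*(1-tb)*(1-tc))*((1-x-y)*tb*tc + x*ta*tc + y*ta*tb)),
          -(x*y*((1-ta)*(1-tb)*(1-tc))*((1-x-y)*tb*tc + x*ta*tc + y*ta*tb)),
          -(y*(1-x-y)*((1-ta)*(1-tb)*(1-tc))*((1-x-y)*tb*tc + x*ta*tc + y*ta*tb)),
          (1-x-y)*x*tc*((1-ta)*(1-tb)*(1-tc)),
          x*y*ta*((1-ta)*(1-tb)*(1-tc)),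
          y*(1-x-y)*tb*((1-ta)*(1-tb)*(1-tc)),
          (1-x-y) * ((1-tb)*(1-tc)*((1-x-y)*tb*tc + x*ta*tc + y*ta*tb)),
          x * ((1-ta)*(1-tc)*((1-x-y)*tb*tc + x*ta*tc + y*ta*tb)),
          y * ((1-ta)*(1-tb)*((1-x-y)*tb*tc + x*ta*tc + y*ta*tb)),
          ?_, ?_, ?_, ?_, ?_, ?_, ?_⟩
  · linear_combination (norm := module)
      ((1-x-y)*((1-ta)*(1-tb)*(1-tc))*((1-x-y)*tb*tc + x*ta*tc + y*ta*tb)) • h0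
  · linear_combination (norm := module)
      (x*((1-ta)*(1-tb)*(1-tc))*((1-x-y)*tb*tc + x*ta*tc + y*ta*tb)) • h0
  · linear_combination (norm := module)
      (y*((1-ta)*(1-tb)*(1-tc))*((1-x-y)*tb*tc + x*ta*tc + y*ta*tb)) • h0
  · linear_combination (norm := module)
      (-(1-x-y)*tb*tc*((1-ta)*(1-tb)*(1-tc))) • h0
  · linear_combination (norm := module)
      (-x*ta*tc*((1-ta)*(1-tb)*(1-tc))) • h0
  · linear_combination (norm := module)
      (-y*ta*tb*((1-ta)*(1-tb)*(1-tc))) • h0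
  · rintro ⟨-, -, -, -, -, -, h7, h8, h9⟩
    have k1 : (1 : ℝ) - x - y = 0 := by
      rcases mul_eq_zero.mp h7 with h | h
      · exact h
      · exact absurd h (mul_ne_zero (mul_ne_zero htb1' htc1') hS)
    have k2 : x = 0 := by
      rcases mul_eq_zero.mp h8 with h | h
      · exact h
      · exact absurd h (mul_ne_zero (mul_ne_zero hta1' htc1') hS)
    have k3 : y = 0 := by
      rcases mul_eq_zero.mp h9 with h | h
      · exact h
      · exact absurd h (mul_ne_zero (mul_ne_zero hta1' htb1') hS)
    rw [k2, k3] at k1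
    norm_num at k1
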